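/- The commutator of the qubit SLD L = ih(|ψ₁⟩⟨ψ₂| − |ψ₂⟩⟨ψ₁|) with σ₋ satisfies Tr(ρ [L,σ₋]†[L,σ₋]) = h², for the state ρ = ½(I + h cosφ σ_x − h sinφ σ_y + (h²−1)σ_z) with eigendecomposition ρ = Σ p_i |ψ_i⟩⟨ψ_i| and L the SLD of this family in φ. -/
import Mathlib

open Matrix

noncomputable section

def σplus : Matrix (Fin 2) (Fin 2) ℂ := !![0, 1; 0, 0]
def σminus : Matrix (Fin 2) (Fin 2) ℂ := !![0, 0; 1, 0]

/-- The Bloch state `ρ = ½(I + h cosφ σ_x − h sinφ σ_y + (h²−1)σ_z)` in matrix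
entries, in the basis `|e⟩ = (1,0)`, `|g⟩ = (0,1)`. -/
def ρB (h φ : ℝ) : Matrix (Fin 2) (Fin 2) ℂ :=
  (1 / 2 : ℂ) • !![((h : ℂ)) ^ 2, (h : ℂ) * Complex.exp (φ * Complex.I);
                   (h : ℂ) * Complex.exp (-(φ * Complex.I)), 2 - ((h : ℂ)) ^ 2]

/-- The `φ`-derivative of `ρB`. -/
def ρBφ (h φ : ℝ) : Matrix (Fin 2) (Fin 2) ℂ :=
  (1 / 2 : ℂ) • !![0, Complex.I * ((h : ℂ) * Complex.exp (φ * Complex.I));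
                   -(Complex.I * ((h : ℂ) * Complex.exp (-(φ * Complex.I)))), 0]

/-- For the SLD `L` of the qubit family `ρB` (in the parameter `φ`), the channel
quantity satisfies `Tr(ρ [L,σ₋]† [L,σ₋]) = h²`. -/
theorem qubit_channel_J_eq_h_sq (h φ : ℝ) (h0 : 0 < h) (h1 : h < 1)
    (L : Matrix (Fin 2) (Fin 2) ℂ) (hL : L.IsHermitian)
    (hSLD : ρBφ h φ = (1 / 2 : ℂ) • (L * ρB h φ + ρB h φ * L)) :
    (ρB h φ * (L * σminus - σminus * L)ᴴ * (L * σminus - σminus * L)).trace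
      = ((h ^ 2 : ℝ) : ℂ) := by
  have hh : (h : ℂ) ≠ 0 := by exact_mod_cast ne_of_gt h0
  have hEEb : Complex.exp (φ * Complex.I) * Complex.exp (-(φ * Complex.I)) = 1 := by
    rw [← Complex.exp_add]; ring_nf; exact Complex.exp_zero
  have e00 := congrFun (congrFun hSLD 0) 0
  have e01 := congrFun (congrFun hSLD 0) 1
  have e10 := congrFun (congrFun hSLD 1) 0
  have e11 := congrFun (congrFun hSLD 1) 1
  simp [ρB, ρBφ, Matrix.mul_apply, Matrix.vecMul, dotProduct,
    Fin.sum_univ_two] at e00 e01 e10 e11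
  have hb : L 0 1 = Complex.I * h * Complex.exp (φ * Complex.I)
      - (L 0 0 + L 1 1) * h * Complex.exp (φ * Complex.I) / 2 := by
    linear_combination -e01
  have hc : L 1 0 = -(Complex.I * h * Complex.exp (-(φ * Complex.I)))
      - (L 0 0 + L 1 1) * h * Complex.exp (-(φ * Complex.I)) / 2 := by
    linear_combination -2*e10
  rw [hb, hc] at e00 e11
  have had : L 0 0 = L 1 1 := by
    have h2 : (h : ℂ)^2 * (L 0 0 - L 1 1) = 0 := by
      linear_combination 2*e00 + (L 0 0 + L 1 1)*(h:ℂ)^2*hEEb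
    rcases mul_eq_zero.1 h2 with h3 | h3
    · exact absurd h3 (pow_ne_zero 2 hh)
    · exact sub_eq_zero.1 h3
  have hd0 : L 1 1 = 0 := by
    have h2 : ((2:ℂ) - 2*(h:ℂ)^2) * L 1 1 = 0 := by
      rw [had] at e11
      linear_combination e11 + (L 1 1)*(h:ℂ)^2*hEEb
    rcases mul_eq_zero.1 h2 with h3 | h3
    · exfalso
      have : ((2:ℂ) - 2*(h:ℂ)^2) = (((2 - 2*h^2 : ℝ)):ℂ) := by push_cast; ring
      rw [this] at h3
      have := Complex.ofReal_eq_zero.1 h3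
      nlinarith
    · exact h3
  have ha0 : L 0 0 = 0 := had.trans hd0
  rw [ha0, hd0] at hb hc
  have hB : L 0 1 = Complex.I * h * Complex.exp (φ * Complex.I) := by
    rw [hb]; ring
  have hC : L 1 0 = -(Complex.I * h * Complex.exp (-(φ * Complex.I))) := by
    rw [hc]; ring
  have hsX : (starRingEnd ℂ) (Complex.exp ((φ:ℂ) * Complex.I)) = Complex.exp (-(φ * Complex.I)) := by
    rw [← Complex.exp_conj]; congr 1; simp
  have hsY : (starRingEnd ℂ) (Complex.exp (-((φ:ℂ) * Complex.I))) = Complex.exp ((φ:ℂ) * Complex.I) := by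
    rw [← Complex.exp_conj]; congr 1; simp
  have hLM : L = !![0, Complex.I * h * Complex.exp (φ * Complex.I);
      -(Complex.I * h * Complex.exp (-(φ * Complex.I))), 0] := by
    ext i j
    fin_cases i <;> fin_cases j <;>
      simp [ha0, hd0, hB, hC]
  rw [hLM]
  simp [ρB, σminus, Matrix.trace, Matrix.mul_apply, Matrix.conjTranspose_apply,
    Matrix.vecMul, dotProduct, Matrix.sub_apply, Fin.sum_univ_two, hsX, hsY,
    _root_.map_mul, Complex.conj_I, Complex.conj_ofReal]
  linear_combination (-(h:ℂ)^2*Complex.I^2)*hEEb - (h:ℂ)^2*Complex.I_sq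

end
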